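/- Let n be a real parameter with 2 < n < 4, let 0 < R < 1, and let ρ(r) = 2/(1−r²). Let v : [0,R] → ℝ be continuously differentiable with v(R) = 0, and set u(r) = ρ(r)^{(2−n)/2}·v(r). Then ∫_0^R u'(r)²·ρ(r)^{n−2}·r^{n−1} dr = (n(n−2)/4)·∫_0^R ρ(r)²·v(r)²·r^{n+1} dr + (n(n−2)/2)·∫_0^R v(r)²·ρ(r)·r^{n−1} dr + ∫_0^R v'(r)²·r^{n−1} dr. -/

import Mathlib

open Real Set

noncomputable section

/-- Equation (3.2): the integration-by-parts identity converting the hyperbolic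
gradient term of the Brezis–Nirenberg quotient to Euclidean form, for
`u = ρ^{(2-n)/2} v` with `v ∈ C¹([0,R])`, `v(R) = 0`. -/
theorem hyperbolic_gradient_identity (n R : ℝ) (hn2 : 2 < n) (hn4 : n < 4)
    (hR0 : 0 < R) (hR1 : R < 1)
    (ρ : ℝ → ℝ) (hρ : ρ = fun r : ℝ => 2 / (1 - r ^ 2))
    (v v' : ℝ → ℝ)
    (hv : ∀ r ∈ Icc (0:ℝ) R, HasDerivWithinAt v (v' r) (Icc 0 R) r)
    (hv'cont : ContinuousOn v' (Icc 0 R))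
    (hvR : v R = 0)
    (u u' : ℝ → ℝ)
    (hu : u = fun r : ℝ => ρ r ^ ((2 - n) / 2) * v r)
    (hu' : ∀ r ∈ Icc (0:ℝ) R, HasDerivWithinAt u (u' r) (Icc 0 R) r) :
    (∫ r in (0:ℝ)..R, (u' r) ^ 2 * ρ r ^ (n - 2) * r ^ (n - 1))
      = (n * (n - 2) / 4) * (∫ r in (0:ℝ)..R, ρ r ^ 2 * (v r) ^ 2 * r ^ (n + 1))
        + (n * (n - 2) / 2) * (∫ r in (0:ℝ)..R, (v r) ^ 2 * ρ r * r ^ (n - 1))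
        + ∫ r in (0:ℝ)..R, (v' r) ^ 2 * r ^ (n - 1) := by
  subst hρ hu
  set ρ : ℝ → ℝ := fun r : ℝ => 2 / (1 - r ^ 2) with hρdef
  set c : ℝ := (2 - n) / 2 with hc
  have hn0 : (0:ℝ) < n := by linarith
  have hden : ∀ r ∈ Icc (0:ℝ) R, (0:ℝ) < 1 - r ^ 2 := by
    intro r hr; nlinarith [hr.1, hr.2]
  have hρpos : ∀ r ∈ Icc (0:ℝ) R, (0:ℝ) < ρ r := fun r hr =>
    div_pos two_pos (hden r hr)
  -- continuity facts
  have hcontρ : ContinuousOn ρ (Icc 0 R) :=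
    ContinuousOn.div continuousOn_const (Continuous.continuousOn (by continuity))
      (fun r hr => (hden r hr).ne')
  have hcontpow : ∀ p : ℝ, 0 ≤ p → ContinuousOn (fun r : ℝ => r ^ p) (Icc 0 R) :=
    fun p hp r _ => (Real.continuousAt_rpow_const r p (Or.inr hp)).continuousWithinAt
  have hcontv : ContinuousOn v (Icc 0 R) := fun r hr => (hv r hr).continuousWithinAt
  have hint : ∀ f : ℝ → ℝ, ContinuousOn f (Icc 0 R) →
      IntervalIntegrable f MeasureTheory.volume 0 R := by
    intro f hf
    exact ContinuousOn.intervalIntegrable (by rwa [uIcc_of_le hR0.le])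
  -- derivative of ρ
  have hρderiv : ∀ r ∈ Icc (0:ℝ) R, HasDerivAt ρ (r * ρ r ^ 2) r := by
    intro r hr
    have h1 : HasDerivAt (fun x : ℝ => 1 - x ^ 2) (-(2 * r)) r := by
      simpa using ((hasDerivAt_pow 2 r).const_sub 1)
    have h2 := (hasDerivAt_const r (2:ℝ)).div h1 (hden r hr).ne'
    refine h2.congr_deriv ?_
    have h3 := (hden r hr).ne'
    simp only [hρdef]
    field_simp
    ring
  -- the candidate derivative of u
  have hW : ∀ r ∈ Icc (0:ℝ) R,
      HasDerivWithinAt (fun r : ℝ => ρ r ^ c * v r)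
        (ρ r ^ c * (c * r * ρ r * v r + v' r)) (Icc 0 R) r := by
    intro r hr
    have hpos := hρpos r hr
    have hW1 : HasDerivAt (fun r : ℝ => ρ r ^ c) (c * r * ρ r ^ c * ρ r) r := by
      have := (hρderiv r hr).rpow_const (p := c) (Or.inl hpos.ne')
      convert this using 1
      have e : ρ r ^ c * ρ r = ρ r ^ 2 * ρ r ^ (c - 1) := by
        rw [← Real.rpow_natCast (ρ r) 2, ← Real.rpow_add hpos,
          show ((2:ℕ):ℝ) + (c - 1) = c + 1 by push_cast; ring,
          Real.rpow_add_one hpos.ne']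
      calc c * r * ρ r ^ c * ρ r = c * (r * (ρ r ^ c * ρ r)) := by ring
        _ = c * (r * (ρ r ^ 2 * ρ r ^ (c - 1))) := by rw [e]
        _ = r * ρ r ^ 2 * c * ρ r ^ (c - 1) := by ring
    have := (hW1.hasDerivWithinAt).mul (hv r hr)
    refine this.congr_deriv ?_
    ring
  -- u' equals the candidate on Icc
  have hu'eq : ∀ r ∈ Icc (0:ℝ) R,
      u' r = ρ r ^ c * (c * r * ρ r * v r + v' r) := by
    intro r hr
    have hud : UniqueDiffWithinAt ℝ (Icc (0:ℝ) R) r := (uniqueDiffOn_Icc hR0) r hr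
    rw [← (hu' r hr).derivWithin hud, (hW r hr).derivWithin hud]
  -- rewrite the LHS integrand
  have hLHS : (∫ r in (0:ℝ)..R, (u' r) ^ 2 * ρ r ^ (n - 2) * r ^ (n - 1))
      = ∫ r in (0:ℝ)..R,
          (c ^ 2 * (ρ r ^ 2 * v r ^ 2 * r ^ (n + 1))
            + 2 * c * (ρ r * r ^ n * (v r * v' r))
            + v' r ^ 2 * r ^ (n - 1)) := by
    apply intervalIntegral.integral_congr_ae
    apply Filter.Eventually.of_forall
    intro r hr
    rw [uIoc_of_le hR0.le] at hr
    have hrIcc : r ∈ Icc (0:ℝ) R := ⟨hr.1.le, hr.2⟩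
    have hr0 : 0 < r := hr.1
    have hpos := hρpos r hrIcc
    rw [hu'eq r hrIcc]
    have e0 : (ρ r ^ c) ^ 2 * ρ r ^ (n - 2) = 1 := by
      rw [sq, ← Real.rpow_add hpos, ← Real.rpow_add hpos]
      rw [show c + c + (n - 2) = 0 by rw [hc]; ring, Real.rpow_zero]
    have e1 : r ^ (n + 1) = r ^ (n - 1) * r ^ 2 := by
      rw [← Real.rpow_natCast r 2, ← Real.rpow_add hr0]; congr 1; push_cast; ring
    have e2 : r ^ n = r ^ (n - 1) * r := by
      rw [← Real.rpow_add_one hr0.ne' (n - 1)]; norm_num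
    calc (ρ r ^ c * (c * r * ρ r * v r + v' r)) ^ 2 * ρ r ^ (n - 2) * r ^ (n - 1)
        = ((ρ r ^ c) ^ 2 * ρ r ^ (n - 2)) * ((c * r * ρ r * v r + v' r) ^ 2 * r ^ (n - 1)) := by
          ring
      _ = (c * r * ρ r * v r + v' r) ^ 2 * r ^ (n - 1) := by rw [e0]; ring
      _ = _ := by rw [e1, e2]; ring
  -- name the integrals
  set A := ∫ r in (0:ℝ)..R, ρ r ^ 2 * v r ^ 2 * r ^ (n + 1) with hA
  set B := ∫ r in (0:ℝ)..R, v r ^ 2 * ρ r * r ^ (n - 1) with hB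
  set C := ∫ r in (0:ℝ)..R, v' r ^ 2 * r ^ (n - 1) with hC
  set M := ∫ r in (0:ℝ)..R, ρ r * r ^ n * (v r * v' r) with hM
  -- integrability of the pieces
  have hiA : IntervalIntegrable (fun r => ρ r ^ 2 * v r ^ 2 * r ^ (n + 1))
      MeasureTheory.volume 0 R :=
    hint _ (((hcontρ.pow 2).mul (hcontv.pow 2)).mul (hcontpow _ (by linarith)))
  have hiB : IntervalIntegrable (fun r => v r ^ 2 * ρ r * r ^ (n - 1))
      MeasureTheory.volume 0 R :=
    hint _ (((hcontv.pow 2).mul hcontρ).mul (hcontpow _ (by linarith)))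
  have hiC : IntervalIntegrable (fun r => v' r ^ 2 * r ^ (n - 1))
      MeasureTheory.volume 0 R :=
    hint _ ((hv'cont.pow 2).mul (hcontpow _ (by linarith)))
  have hiM : IntervalIntegrable (fun r => ρ r * r ^ n * (v r * v' r))
      MeasureTheory.volume 0 R :=
    hint _ ((hcontρ.mul (hcontpow _ hn0.le)).mul (hcontv.mul hv'cont))
  -- split the integral
  have hsplit : (∫ r in (0:ℝ)..R, (u' r) ^ 2 * ρ r ^ (n - 2) * r ^ (n - 1))
      = c ^ 2 * A + 2 * c * M + C := by
    rw [hLHS]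
    rw [intervalIntegral.integral_add (((hiA.const_mul _).add (hiM.const_mul _)))
      hiC, intervalIntegral.integral_add (hiA.const_mul _) (hiM.const_mul _),
      intervalIntegral.integral_const_mul, intervalIntegral.integral_const_mul]
  -- integration by parts
  have hIBP : A + n * B + 2 * M = 0 := by
    have key : (∫ r in (0:ℝ)..R,
        (ρ r ^ 2 * v r ^ 2 * r ^ (n + 1) + n * (v r ^ 2 * ρ r * r ^ (n - 1))
          + 2 * (ρ r * r ^ n * (v r * v' r)))) = 0 := by
      have := intervalIntegral.integral_eq_sub_of_hasDeriv_right_of_le hR0.le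
        (f := fun r => ρ r * r ^ n * v r ^ 2)
        (f' := fun r => ρ r ^ 2 * v r ^ 2 * r ^ (n + 1)
          + n * (v r ^ 2 * ρ r * r ^ (n - 1)) + 2 * (ρ r * r ^ n * (v r * v' r)))
        ?_ ?_ ?_
      · rw [this]
        simp [hvR, Real.zero_rpow hn0.ne']
      · exact (hcontρ.mul (hcontpow _ hn0.le)).mul (hcontv.pow 2)
      · intro x hx
        have hxIcc : x ∈ Icc (0:ℝ) R := ⟨hx.1.le, hx.2.le⟩
        have hx0 : 0 < x := hx.1
        have hvd : HasDerivAt v (v' x) x :=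
          (hv x hxIcc).hasDerivAt (Icc_mem_nhds hx.1 hx.2)
        have h1 : HasDerivAt (fun r : ℝ => r ^ n) (n * x ^ (n - 1)) x :=
          Real.hasDerivAt_rpow_const (Or.inl hx0.ne')
        have h2 := ((hρderiv x hxIcc).mul h1).mul (hvd.pow 2)
        apply HasDerivAt.hasDerivWithinAt
        refine h2.congr_deriv ?_
        have e1 : x ^ (n + 1) = x ^ n * x := Real.rpow_add_one hx0.ne' n
        have e2 : x ^ n = x ^ (n - 1) * x := by
          rw [← Real.rpow_add_one hx0.ne' (n - 1)]; congr 1; ring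
        simp only [Pi.mul_apply, Pi.pow_apply]
        rw [e1, e2]
        push_cast
        ring
      · exact ((hiA.add (hiB.const_mul n)).add (hiM.const_mul 2))
    rw [intervalIntegral.integral_add (hiA.add (hiB.const_mul n)) (hiM.const_mul 2),
      intervalIntegral.integral_add hiA (hiB.const_mul n),
      intervalIntegral.integral_const_mul, intervalIntegral.integral_const_mul] at key
    exact key
  rw [hsplit, hc]
  linear_combination ((2 - n) / 2) * hIBP

end
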